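/- Let (F_i)_{i ∈ I} be presheaves of types on a topological space B. Then Supp(∏_i F_i) ⊆ interior(⋂_i Supp F_i), where ∏_i F_i is the objectwise product presheaf U ↦ ∏_i F_i(U). Moreover, equality holds in each of the following cases: (a) B is Alexandrov-discrete (arbitrary intersections of open sets are open); (b) B is a zero-dimensional separable metrizable space and each F_i is a sheaf of types. -/

import Mathlib

open TopologicalSpace

/-- A presheaf of types on a topological space `B`. -/
structure Psh (B : Type) [TopologicalSpace B] where
  obj : Opens B → Type
  res : ∀ {U V : Opens B}, V ≤ U → obj U → obj V
  res_id : ∀ (U : Opens B) (x : obj U), res le_rfl x = x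
  res_comp : ∀ {U V W : Opens B} (hWV : W ≤ V) (hVU : V ≤ U) (x : obj U),
    res hWV (res hVU x) = res (hWV.trans hVU) x

namespace Psh

variable {B : Type} [TopologicalSpace B]

/-- The sheaf conditions: separation and gluing for arbitrary open covers. -/
def IsSheaf (F : Psh B) : Prop :=
  ∀ {ι : Type} (U : Opens B) (V : ι → Opens B) (hV : ∀ i, V i ≤ U),
    (∀ x ∈ U, ∃ i, x ∈ V i) →
    (∀ s t : F.obj U, (∀ i, F.res (hV i) s = F.res (hV i) t) → s = t) ∧
    ∀ sf : ∀ i, F.obj (V i),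
      (∀ i j, F.res (inf_le_left : V i ⊓ V j ≤ V i) (sf i)
            = F.res (inf_le_right : V i ⊓ V j ≤ V j) (sf j)) →
      ∃ s : F.obj U, ∀ i, F.res (hV i) s = sf i

/-- The support of a presheaf: the union of all open sets with nonempty sections. -/
def supp (F : Psh B) : Set B := {b | ∃ U : Opens B, b ∈ U ∧ Nonempty (F.obj U)}

/-- The germ relation at a point. -/
def stalkRel (F : Psh B) (b : B) :
    (Σ U : {U : Opens B // b ∈ U}, F.obj U.1) →
      (Σ U : {U : Opens B // b ∈ U}, F.obj U.1) → Prop :=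
  fun x y => ∃ (W : Opens B) (_ : b ∈ W) (h1 : W ≤ x.1.1) (h2 : W ≤ y.1.1),
    F.res h1 x.2 = F.res h2 y.2

/-- The stalk of a presheaf at a point: the set of germs, i.e. the colimit of
sections over open neighborhoods of the point. -/
def stalk (F : Psh B) (b : B) : Type := Quot (F.stalkRel b)

/-- The germ of a section at a point. -/
def germ (F : Psh B) {b : B} {U : Opens B} (hb : b ∈ U) (s : F.obj U) : F.stalk b :=
  Quot.mk _ ⟨⟨U, hb⟩, s⟩

/-- A morphism of presheaves `F|_U → G|_U` (restricted to opens contained in `U`). -/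
structure Hom (F G : Psh B) (U : Opens B) where
  app : ∀ (V : Opens B), V ≤ U → F.obj V → G.obj V
  natural : ∀ {V W : Opens B} (hVU : V ≤ U) (hWV : W ≤ V) (s : F.obj V),
    G.res hWV (app V hVU s) = app W (hWV.trans hVU) (F.res hWV s)

/-- The Hom-presheaf `U ↦ {presheaf morphisms F|_U → G|_U}`. -/
def homPsh (F G : Psh B) : Psh B where
  obj U := Hom F G U
  res {U V} h φ :=
    { app := fun W hW => φ.app W (hW.trans h)
      natural := fun hVU hWV s => φ.natural _ hWV s }
  res_id := fun U φ => rfl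
  res_comp := fun _ _ _ => rfl

/-- Objectwise binary product of presheaves. -/
def prodObj (F G : Psh B) : Psh B where
  obj U := F.obj U × G.obj U
  res h x := (F.res h x.1, G.res h x.2)
  res_id U x := by (try dsimp only); rw [F.res_id, G.res_id]
  res_comp h1 h2 x := by dsimp only; rw [F.res_comp, G.res_comp]

/-- Objectwise binary coproduct of presheaves. -/
def sumObj (F G : Psh B) : Psh B where
  obj U := F.obj U ⊕ G.obj U
  res h x := x.elim (fun a => Sum.inl (F.res h a)) (fun c => Sum.inr (G.res h c))
  res_id U x := by
    cases x with
    | inl a => simp only [Sum.elim_inl]; rw [F.res_id]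
    | inr c => simp only [Sum.elim_inr]; rw [G.res_id]
  res_comp h1 h2 x := by
    cases x with
    | inl a => simp only [Sum.elim_inl]; rw [F.res_comp]
    | inr c => simp only [Sum.elim_inr]; rw [G.res_comp]

/-- Objectwise product of a family of presheaves. -/
def piObj {ι : Type} (F : ι → Psh B) : Psh B where
  obj U := ∀ i, (F i).obj U
  res h x i := (F i).res h (x i)
  res_id U x := by funext i; exact (F i).res_id U (x i)
  res_comp h1 h2 x := by funext i; exact (F i).res_comp h1 h2 (x i)

/-- Objectwise coproduct (disjoint union) of a family of presheaves. -/
def sigmaObj {ι : Type} (F : ι → Psh B) : Psh B where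
  obj U := Σ i, (F i).obj U
  res h x := ⟨x.1, (F x.1).res h x.2⟩
  res_id U x := by
    rcases x with ⟨i, s⟩
    exact congrArg (Sigma.mk i) ((F i).res_id U s)
  res_comp h1 h2 x := by
    rcases x with ⟨i, s⟩
    exact congrArg (Sigma.mk i) ((F i).res_comp h1 h2 s)

/-- The characteristic presheaf of an open set: a one-element type on opens
contained in `W`, the empty type elsewhere. -/
def char (W : Opens B) : Psh B where
  obj U := PLift (U ≤ W)
  res h x := ⟨h.trans x.down⟩
  res_id U x := rfl
  res_comp _ _ _ := rfl

/-- An isomorphism of presheaves. -/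
structure Iso (F G : Psh B) where
  hom : ∀ U, F.obj U ≃ G.obj U
  natural : ∀ {U V : Opens B} (h : V ≤ U) (s : F.obj U),
    G.res h (hom U s) = hom V (F.res h s)

end Psh


namespace Psh

variable {B : Type} [TopologicalSpace B]

theorem eq_of_forall_not_mem {G : Psh B} (hG : G.IsSheaf) {W : Opens B}
    (h : ∀ x, x ∉ W) (s t : G.obj W) : s = t :=
  (hG W (fun _ : Empty => W) (fun _ => le_rfl) (fun x hx => absurd hx (h x))).1 s t
    (fun e => e.elim)

theorem nonempty_of_forall_not_mem {G : Psh B} (hG : G.IsSheaf) {W : Opens B}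
    (h : ∀ x, x ∉ W) : Nonempty (G.obj W) := by
  obtain ⟨s, -⟩ := (hG W (fun _ : Empty => W) (fun _ => le_rfl)
    (fun x hx => absurd hx (h x))).2 (fun e => e.elim) (fun e => e.elim)
  exact ⟨s⟩

theorem nonempty_of_subset_supp (hsc : SecondCountableTopology B)
    (hbasis : IsTopologicalBasis {s : Set B | IsClopen s})
    {G : Psh B} (hG : G.IsSheaf) (U : Opens B) (hU : (U : Set B) ⊆ G.supp) :
    Nonempty (G.obj U) := by
  classical
  by_cases hUe : ∀ x, x ∉ U
  · exact nonempty_of_forall_not_mem hG hUe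
  push_neg at hUe
  haveI := hsc
  set P : Opens B → Prop := fun W => W ≤ U ∧ IsClosed (W : Set B) ∧ Nonempty (G.obj W) with hP
  have hcover : ⋃ W : {W : Opens B // P W}, (W.1 : Set B) = U := by
    apply subset_antisymm
    · exact Set.iUnion_subset fun W => W.2.1
    · intro x hx
      obtain ⟨V, hxV, hne⟩ := hU hx
      obtain ⟨W, hWc, hxW, hWsub⟩ := hbasis.exists_subset_of_mem_open
        (Set.mem_inter hxV hx) (V.2.inter U.2)
      refine Set.mem_iUnion.2 ⟨⟨⟨W, hWc.isOpen⟩, fun y hy => (hWsub hy).2,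
        hWc.isClosed, ⟨G.res (fun y hy => (hWsub hy).1) hne.some⟩⟩, hxW⟩
  obtain ⟨T, hTc, hTU⟩ := TopologicalSpace.isOpen_iUnion_countable
    (fun W : {W : Opens B // P W} => (W.1 : Set B)) (fun W => W.1.2)
  have hTne : T.Nonempty := by
    obtain ⟨x, hx⟩ := hUe
    have hx' : x ∈ ⋃ i ∈ T, ((i : {W : Opens B // P W}).1 : Set B) := by
      rw [hTU, hcover]; exact hx
    obtain ⟨i, hi, -⟩ := Set.mem_iUnion₂.1 hx'
    exact ⟨i, hi⟩
  obtain ⟨f, hf⟩ := hTc.exists_surjective hTne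
  set Wn : ℕ → Opens B := fun n => ((f n : {W : Opens B // P W}) : {W : Opens B // P W}).1
    with hWn
  have hWnP : ∀ n, P (Wn n) := fun n => (f n).1.2
  have hWcover : (U : Set B) ⊆ ⋃ n, (Wn n : Set B) := by
    intro x hx
    have hx' : x ∈ ⋃ i ∈ T, ((i : {W : Opens B // P W}).1 : Set B) := by
      rw [hTU, hcover]; exact hx
    obtain ⟨i, hi, hxi⟩ := Set.mem_iUnion₂.1 hx'
    obtain ⟨n, hn⟩ := hf ⟨i, hi⟩
    exact Set.mem_iUnion.2 ⟨n, show x ∈ (((f n : {W : Opens B // P W})).1 : Set B) by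
      rw [hn]; exact hxi⟩
  set D : ℕ → Opens B := fun n =>
    ⟨(Wn n : Set B) \ ⋃ k ∈ Finset.range n, (Wn k : Set B),
      (Wn n).2.sdiff (Set.Finite.isClosed_biUnion (Finset.range n).finite_toSet
        (fun k _ => (hWnP k).2.1))⟩ with hD
  have hDW : ∀ n, D n ≤ Wn n := fun n x hx => hx.1
  have hV : ∀ n, D n ≤ U := fun n => (hDW n).trans (hWnP n).1
  have hcov : ∀ x ∈ U, ∃ n, x ∈ D n := by
    intro x hx
    have hex : ∃ n, x ∈ Wn n := Set.mem_iUnion.1 (hWcover hx)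
    refine ⟨Nat.find hex, Nat.find_spec hex, ?_⟩
    intro hmem
    obtain ⟨k, hk, hxk⟩ := Set.mem_iUnion₂.1 hmem
    exact Nat.find_min hex (Finset.mem_range.1 hk) hxk
  set sf : ∀ n, G.obj (D n) := fun n => G.res (hDW n) (hWnP n).2.2.some with hsf
  have hcompat : ∀ n m, G.res (inf_le_left : D n ⊓ D m ≤ D n) (sf n)
      = G.res (inf_le_right : D n ⊓ D m ≤ D m) (sf m) := by
    intro n m
    rcases eq_or_ne n m with rfl | hnm
    · rfl
    · apply eq_of_forall_not_mem hG
      intro x hx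
      have hx1 : x ∈ D n := hx.1
      have hx2 : x ∈ D m := hx.2
      rcases hnm.lt_or_gt with h | h
      · exact hx2.2 (Set.mem_iUnion₂.2 ⟨n, Finset.mem_range.2 h, hx1.1⟩)
      · exact hx1.2 (Set.mem_iUnion₂.2 ⟨m, Finset.mem_range.2 h, hx2.1⟩)
  obtain ⟨s, -⟩ := (hG U D hV hcov).2 sf hcompat
  exact ⟨s⟩

end Psh

/-- The support of an objectwise product of presheaves is contained in the interior
of the intersection of the supports, with equality (a) over Alexandrov-discrete
spaces, and (b) over zero-dimensional separable metrizable spaces when each factor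
is a sheaf. -/
theorem stmt_10 {B : Type} [TopologicalSpace B] {ι : Type} (F : ι → Psh B) :
    Psh.supp (Psh.piObj F) ⊆ interior (⋂ i, (F i).supp) ∧
    (AlexandrovDiscrete B → Psh.supp (Psh.piObj F) = interior (⋂ i, (F i).supp)) ∧
    (MetrizableSpace B → SecondCountableTopology B →
      IsTopologicalBasis {s : Set B | IsClopen s} →
      (∀ i, (F i).IsSheaf) →
      Psh.supp (Psh.piObj F) = interior (⋂ i, (F i).supp)) := by

  have h1 : Psh.supp (Psh.piObj F) ⊆ interior (⋂ i, (F i).supp) := by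
    rintro b ⟨U, hbU, ⟨s⟩⟩
    refine mem_interior.2 ⟨U, ?_, U.2, hbU⟩
    intro y hy
    exact Set.mem_iInter.2 fun i => ⟨U, hy, ⟨s i⟩⟩
  refine ⟨h1, ?_, ?_⟩
  · intro hAD
    refine h1.antisymm ?_
    intro b hb
    have hb' : ∀ i, b ∈ (F i).supp := fun i => Set.mem_iInter.1 (interior_subset hb) i
    choose U hbU hne using hb'
    exact ⟨⟨⋂ i, (U i : Set B), isOpen_iInter fun i => (U i).2⟩, Set.mem_iInter.2 hbU,
      ⟨fun i => (F i).res (fun x hx => Set.mem_iInter.1 hx i) (hne i).some⟩⟩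
  · intro _ hsc hbasis hsh
    refine h1.antisymm ?_
    intro b hb
    refine ⟨⟨interior (⋂ i, (F i).supp), isOpen_interior⟩, hb,
      ⟨fun i => (Psh.nonempty_of_subset_supp hsc hbasis (hsh i)
        ⟨interior (⋂ i, (F i).supp), isOpen_interior⟩ ?_).some⟩⟩
    exact fun y hy => Set.mem_iInter.1 (interior_subset hy) i
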